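/- Let S be a set and e : S ≃ S a bijection with the orbit {eⁿ(s) : n ∈ ℤ} of every s ∈ S infinite, and let T = FreeGroup.freeGroupCongr e be the induced automorphism of Γ = FreeGroup S. Let k, m ≥ 1, let ι : {1,…,m} → {1,…,k} satisfy ι(j) ≠ ι(j+1) for 1 ≤ j < m, and let g₁, …, g_m ∈ Γ all be ≠ 1. Then there exists N ∈ ℕ such that for every n : {1,…,k} → ℤ with |n(i) − n(j)| ≥ N for all i ≠ j, one has T^{n(ι(1))}(g₁) · T^{n(ι(2))}(g₂) ⋯ T^{n(ι(m))}(g_m) ≠ 1 in Γ. -/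

import Mathlib

open Monoid

private lemma fj_perm_inj {S : Type*} (e : S ≃ S)
    (horb : ∀ s : S, (Set.range fun n : ℤ => (e ^ n) s).Infinite) (s : S) :
    Function.Injective fun n : ℤ => (e ^ n) s := by
  intro a b hab
  by_contra hne
  have hp0 : a - b ≠ 0 := sub_ne_zero.2 hne
  -- s is fixed by e ^ (a - b)
  have hp : (e ^ (a - b)) s = s := by
    have : (e ^ (-b)) ((e ^ a) s) = (e ^ (-b)) ((e ^ b) s) := congrArg _ hab
    rwa [← Equiv.Perm.mul_apply, ← Equiv.Perm.mul_apply, ← zpow_add, ← zpow_add,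
      neg_add_cancel, zpow_zero, Equiv.Perm.one_apply, add_comm, ← sub_eq_add_neg] at this
  set q : ℤ := |a - b| with hq
  have hq0 : 0 < q := abs_pos.2 hp0
  have hqfix : (e ^ q) s = s := by
    rcases abs_choice (a - b) with h | h
    · rw [hq, h]; exact hp
    · rw [hq, h, zpow_neg]
      exact Function.IsFixedPt.perm_inv hp
  have hqall : ∀ t : ℤ, (e ^ (q * t)) s = s := by
    intro t
    have := Function.IsFixedPt.perm_zpow (e := e ^ q) hqfix t
    rw [← zpow_mul] at this; exact this
  apply horb s
  have hsub : (Set.range fun n : ℤ => (e ^ n) s) ⊆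
      (fun r : ℤ => (e ^ r) s) '' Set.Ico 0 q := by
    rintro _ ⟨n, rfl⟩
    refine ⟨n % q, ⟨Int.emod_nonneg n hq0.ne', Int.emod_lt_of_pos n hq0⟩, ?_⟩
    have hdm : q * (n / q) + n % q = n := Int.mul_ediv_add_emod n q
    calc (e ^ (n % q)) s = (e ^ (n % q)) ((e ^ (q * (n / q))) s) := by rw [hqall]
      _ = (e ^ n) s := by
          rw [← Equiv.Perm.mul_apply, ← zpow_add, add_comm, hdm]
  exact Set.Finite.subset ((Set.finite_Ico 0 q).image _) hsub

private lemma fj_congr_zpow {S : Type*} (e : S ≃ S) (n : ℤ) :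
    (FreeGroup.freeGroupCongr e ^ n : FreeGroup S ≃* FreeGroup S) =
      FreeGroup.freeGroupCongr (e ^ n) := by
  let F : Equiv.Perm S →* MulAut (FreeGroup S) :=
  { toFun := fun f => FreeGroup.freeGroupCongr f
    map_one' := by
      ext x
      simp [FreeGroup.map.id']
    map_mul' := by
      intro a b
      ext x
      simp [MulAut.mul_apply, FreeGroup.map.comp, Equiv.Perm.coe_mul, Function.comp_def] }
  exact (F.map_zpow e n).symm

private lemma fj_phi_mk {S : Type*} {k : ℕ} (c : S → Fin k)
    (L : List (S × Bool)) (i : Fin k) (hL : ∀ p ∈ L, c p.1 = i) :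
    FreeGroup.lift (fun s => CoprodI.of (M := fun _ : Fin k => FreeGroup S)
        (i := c s) (FreeGroup.of s)) (FreeGroup.mk L)
      = CoprodI.of (i := i) (FreeGroup.mk L) := by
  induction L with
  | nil => rw [← FreeGroup.one_eq_mk]; simp
  | cons p L ih =>
    have hsplit : FreeGroup.mk (p :: L) = FreeGroup.mk [p] * FreeGroup.mk L := by
      rw [FreeGroup.mul_mk]; rfl
    rw [hsplit, map_mul, map_mul, ih (fun q hq => hL q (List.mem_cons_of_mem _ hq))]
    congr 1
    obtain ⟨s, b⟩ := p
    have hcs : c s = i := hL (s, b) List.mem_cons_self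
    cases b
    · have h1 : FreeGroup.mk [(s, false)] = (FreeGroup.of s)⁻¹ := by
        rw [show FreeGroup.of s = FreeGroup.mk [(s, true)] from rfl, FreeGroup.inv_mk]
        rfl
      rw [h1, map_inv, map_inv, FreeGroup.lift_apply_of, hcs]
    · rw [show FreeGroup.mk [(s, true)] = FreeGroup.of s from rfl, FreeGroup.lift_apply_of, hcs]




/-- key combinatorial step of Theorem 4.1. Let `e : S ≃ S` have all
orbits infinite and `T = FreeGroup.freeGroupCongr e`. For nontrivial
`g 0, …, g (m-1) ∈ FreeGroup S` and indices `ι : Fin m → Fin k` with consecutive values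
distinct, there is `N` such that whenever `|n i − n j| ≥ N` for all `i ≠ j`, the
alternating product `T^{n (ι 0)}(g 0) ⋯ T^{n (ι (m-1))}(g (m-1))` is nontrivial. -/
theorem free_joinings_stmt7
    {S : Type*} (e : S ≃ S)
    (horb : ∀ s : S, (Set.range fun n : ℤ => (e ^ n) s).Infinite)
    (k m : ℕ) (hk : 1 ≤ k) (hm : 1 ≤ m)
    (ι : Fin m → Fin k)
    (hι : ∀ j : Fin m, (h : (j : ℕ) + 1 < m) → ι j ≠ ι ⟨(j : ℕ) + 1, h⟩)
    (g : Fin m → FreeGroup S) (hg : ∀ j, g j ≠ 1) :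
    ∃ N : ℕ, ∀ n : Fin k → ℤ, (∀ i j, i ≠ j → (N : ℤ) ≤ |n i - n j|) →
      (List.ofFn fun j =>
        ((FreeGroup.freeGroupCongr e ^ n (ι j) :
          FreeGroup S ≃* FreeGroup S) (g j))).prod ≠ 1 := by
  classical
  set Fset : Set S := ⋃ j : Fin m, Prod.fst '' {p | p ∈ (g j).toWord} with hFset
  have hFfin : Fset.Finite :=
    Set.finite_iUnion fun j => ((g j).toWord.finite_toSet).image _
  set D : Set ℤ := {d | ∃ s ∈ Fset, ∃ t ∈ Fset, (e ^ d) s = t} with hDdef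
  have hDfin : D.Finite := by
    have hsub : D ⊆ ⋃ s ∈ Fset, ⋃ t ∈ Fset, {d : ℤ | (e ^ d) s = t} := by
      rintro d ⟨s, hs, t, ht, hd⟩
      exact Set.mem_biUnion hs (Set.mem_biUnion ht hd)
    refine Set.Finite.subset ?_ hsub
    refine Set.Finite.biUnion hFfin fun s _ => Set.Finite.biUnion hFfin fun t _ => ?_
    refine Set.Subsingleton.finite fun d₁ h₁ d₂ h₂ => ?_
    exact fj_perm_inj e horb s (h₁.trans h₂.symm)
  obtain ⟨B, hB⟩ := (hDfin.image Int.natAbs).bddAbove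
  refine ⟨B + 1, ?_⟩
  intro n hn
  -- disjointness of the shifted supports
  have hdisj : ∀ i j : Fin k, i ≠ j → ∀ s ∈ Fset, ∀ t ∈ Fset,
      (e ^ n i) s ≠ (e ^ n j) t := by
    intro i j hij s hs t ht hEq
    have hd : (n i - n j) ∈ D := by
      refine ⟨s, hs, t, ht, ?_⟩
      have : (e ^ (-n j)) ((e ^ n i) s) = (e ^ (-n j)) ((e ^ n j) t) := congrArg _ hEq
      rwa [← Equiv.Perm.mul_apply, ← Equiv.Perm.mul_apply, ← zpow_add, ← zpow_add,
        neg_add_cancel, zpow_zero, Equiv.Perm.one_apply, add_comm, ← sub_eq_add_neg] at this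
    have h1 : (n i - n j).natAbs ≤ B := hB ⟨n i - n j, hd, rfl⟩
    have h2 : ((B : ℤ) + 1) ≤ |n i - n j| := by
      have := hn i j hij; push_cast at this ⊢; omega
    rw [Int.abs_eq_natAbs] at h2
    omega
  -- coloring
  set A : Fin k → Set S := fun i => (fun s => (e ^ n i) s) '' Fset with hA
  set c : S → Fin k := fun s => if h : ∃ i, s ∈ A i then h.choose else ⟨0, hk⟩ with hc
  have hcol : ∀ (i : Fin k), ∀ s ∈ A i, c s = i := by
    intro i s hs
    have h : ∃ i', s ∈ A i' := ⟨i, hs⟩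
    rw [hc]
    simp only [dif_pos h]
    by_contra hne
    obtain ⟨t, ht, hts⟩ := h.choose_spec
    obtain ⟨u, hu, hus⟩ := hs
    exact hdisj _ _ hne t ht u hu (hts.trans hus.symm)
  set φ : FreeGroup S →* CoprodI (fun _ : Fin k => FreeGroup S) :=
    FreeGroup.lift fun s => CoprodI.of (M := fun _ : Fin k => FreeGroup S)
      (i := c s) (FreeGroup.of s) with hφdef
  set h : Fin m → FreeGroup S := fun j =>
    FreeGroup.mk ((g j).toWord.map fun x => ((e ^ n (ι j)) x.1, x.2)) with hh
  have key : ∀ j, ((FreeGroup.freeGroupCongr e ^ n (ι j) :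
      FreeGroup S ≃* FreeGroup S)) (g j) = h j := by
    intro j
    rw [fj_congr_zpow]
    conv_lhs => rw [← FreeGroup.mk_toWord (x := g j)]
    rw [FreeGroup.freeGroupCongr_apply, FreeGroup.map.mk]
  have hmem : ∀ j, ∀ p ∈ (g j).toWord.map fun x => ((e ^ n (ι j)) x.1, x.2),
      c p.1 = ι j := by
    intro j p hp
    obtain ⟨x, hx, rfl⟩ := List.mem_map.1 hp
    refine hcol (ι j) _ ⟨x.1, ?_, rfl⟩
    exact Set.mem_iUnion.2 ⟨j, ⟨x, hx, rfl⟩⟩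
  have hφh : ∀ j, φ (h j) = CoprodI.of (i := ι j) (h j) :=
    fun j => fj_phi_mk c _ _ (hmem j)
  have hne1 : ∀ j, h j ≠ 1 := by
    intro j hj1
    apply hg j
    have := key j
    rw [hj1] at this
    have h2 : ((FreeGroup.freeGroupCongr e ^ n (ι j) :
        FreeGroup S ≃* FreeGroup S)) (g j) =
        ((FreeGroup.freeGroupCongr e ^ n (ι j) :
        FreeGroup S ≃* FreeGroup S)) 1 := by rw [this, map_one]
    exact (FreeGroup.freeGroupCongr e ^ n (ι j) :
        FreeGroup S ≃* FreeGroup S).injective h2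
  -- the reduced word
  set w : CoprodI.Word (fun _ : Fin k => FreeGroup S) :=
    { toList := List.ofFn fun j => (⟨ι j, h j⟩ : Σ _ : Fin k, FreeGroup S)
      ne_one := by
        intro l hl
        rw [List.mem_ofFn] at hl
        obtain ⟨j, rfl⟩ := hl
        exact hne1 j
      chain_ne := by
        rw [List.isChain_iff_getElem]
        intro i hi
        simp only [List.getElem_ofFn]
        rw [List.length_ofFn] at hi
        have h1 : i + 1 < m := by omega
        have := hι ⟨i, by omega⟩ h1
        simpa using this } with hw
  intro hcontra
  have hwprod : w.prod = 1 := by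
    have h2 : φ ((List.ofFn fun j =>
        ((FreeGroup.freeGroupCongr e ^ n (ι j) :
          FreeGroup S ≃* FreeGroup S) (g j))).prod) = w.prod := by
      rw [MonoidHom.map_list_prod, List.map_ofFn]
      unfold CoprodI.Word.prod
      rw [hw]
      simp only [List.map_ofFn]
      refine congrArg List.prod (congrArg List.ofFn (funext fun j => ?_))
      simp only [Function.comp_apply]
      rw [key j, hφh j]
    rw [hcontra, map_one] at h2
    exact h2.symm
  have hinj : Function.Injective
      (CoprodI.Word.prod (M := fun _ : Fin k => FreeGroup S)) := by
    intro a b hab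
    exact (CoprodI.Word.equiv (M := fun _ : Fin k => FreeGroup S)).symm.injective hab
  have hempty : w = CoprodI.Word.empty := by
    apply hinj
    rw [hwprod, CoprodI.Word.prod_empty]
  have : (List.ofFn fun j => (⟨ι j, h j⟩ : Σ _ : Fin k, FreeGroup S)).length = 0 := by
    rw [show (List.ofFn fun j => (⟨ι j, h j⟩ : Σ _ : Fin k, FreeGroup S)) = w.toList from rfl,
      hempty]
    rfl
  rw [List.length_ofFn] at this
  omega
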